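/- arXiv:1809.09587 — 5 statements merged into one kernel-verified Lean document; each statement's English description precedes it below -/
import Mathlib

section
/- Let n be a positive integer and let X be an S(2n)-space. Then for every subset A of X, the cardinality of the θⁿ-closure of A satisfies |cl_{θⁿ}(A)| ≤ |A|^{κ_{θ(n)}(X)} (cardinal exponentiation). -/
open Cardinal Set

universe u

/-- The θⁿ-closure: `x ∈ thetaCl n M` iff there is NO chain of open sets
`U 0 ⊆ U 1 ⊆ ... ⊆ U (n-1)` with `x ∈ U 0`, `closure (U i) ⊆ U (i+1)` for `i+1 < n`,
and `closure (U (n-1)) ∩ M = ∅`. -/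
def thetaCl (n : ℕ) {X : Type u} [TopologicalSpace X] (M : Set X) : Set X :=
  {x | ¬ ∃ U : ℕ → Set X, (∀ i, i < n → IsOpen (U i)) ∧ x ∈ U 0 ∧
    (∀ i, i + 1 < n → closure (U i) ⊆ U (i + 1)) ∧
    closure (U (n - 1)) ∩ M = ∅}

/-- The θ₀ⁿ-closure: as `thetaCl` but the last set itself misses `M`. -/
def theta0Cl (n : ℕ) {X : Type u} [TopologicalSpace X] (M : Set X) : Set X :=
  {x | ¬ ∃ U : ℕ → Set X, (∀ i, i < n → IsOpen (U i)) ∧ x ∈ U 0 ∧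
    (∀ i, i + 1 < n → closure (U i) ⊆ U (i + 1)) ∧
    U (n - 1) ∩ M = ∅}

/-- `X` is an S(m)-space: any two distinct points are S(m)-separated. -/
def SSpace (m : ℕ) (X : Type u) [TopologicalSpace X] : Prop :=
  ∀ x y : X, x ≠ y → x ∉ thetaCl m ({y} : Set X)

/-- `U` is an n-hull of `A`: there are open sets `V 0, ..., V (n-1) = U` with
`A ⊆ V 0` and `closure (V i) ⊆ V (i+1)` for `i+1 < n`. -/
def IsNHull (n : ℕ) {X : Type u} [TopologicalSpace X] (A U : Set X) : Prop :=
  ∃ V : ℕ → Set X, (∀ i, i < n → IsOpen (V i)) ∧ A ⊆ V 0 ∧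
    (∀ i, i + 1 < n → closure (V i) ⊆ V (i + 1)) ∧ U = V (n - 1)

/-- A closed n-hull of `A` is the closure of an n-hull of `A`. -/
def IsClosedNHull (n : ℕ) {X : Type u} [TopologicalSpace X] (A W : Set X) : Prop :=
  ∃ U : Set X, IsNHull n A U ∧ W = closure U

/-- `κ_{θ(n)}(X)`: the smallest infinite cardinal `κ` such that every point `x` has a
family of at most `κ` closed n-hulls of `{x}` which is cofinal (under `⊇`) in all
closed n-hulls of `{x}`. -/
noncomputable def kappaTheta (n : ℕ) (X : Type u) [TopologicalSpace X] : Cardinal.{u} :=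
  sInf {κ : Cardinal.{u} | Cardinal.aleph0 ≤ κ ∧ ∀ x : X, ∃ 𝒱 : Set (Set X),
    #𝒱 ≤ κ ∧ (∀ W ∈ 𝒱, IsClosedNHull n ({x} : Set X) W) ∧
    ∀ W : Set X, IsClosedNHull n ({x} : Set X) W → ∃ B ∈ 𝒱, B ⊆ W}

/-- `κ_{θ₀(n)}(X)`: as `kappaTheta` but with (open) n-hulls of `{x}`. -/
noncomputable def kappaTheta0 (n : ℕ) (X : Type u) [TopologicalSpace X] : Cardinal.{u} :=
  sInf {κ : Cardinal.{u} | Cardinal.aleph0 ≤ κ ∧ ∀ x : X, ∃ 𝒱 : Set (Set X),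
    #𝒱 ≤ κ ∧ (∀ W ∈ 𝒱, IsNHull n ({x} : Set X) W) ∧
    ∀ W : Set X, IsNHull n ({x} : Set X) W → ∃ B ∈ 𝒱, B ⊆ W}

/-- `sL_{θ(n)}(X)`: the smallest infinite cardinal `κ` such that for every `A ⊆ X` and
every family `𝒰` of open sets with `thetaCl n A ⊆ ⋃₀ 𝒰` there is `𝒱 ⊆ 𝒰` with
`#𝒱 ≤ κ` and `A ⊆ closure (⋃₀ 𝒱)`. -/
noncomputable def sLTheta (n : ℕ) (X : Type u) [TopologicalSpace X] : Cardinal.{u} :=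
  sInf {κ : Cardinal.{u} | Cardinal.aleph0 ≤ κ ∧ ∀ (A : Set X) (𝒰 : Set (Set X)),
    (∀ U ∈ 𝒰, IsOpen U) → thetaCl n A ⊆ ⋃₀ 𝒰 →
    ∃ 𝒱 ⊆ 𝒰, #𝒱 ≤ κ ∧ A ⊆ closure (⋃₀ 𝒱)}

/-- `sL_{θ₀(n)}(X)`: the smallest infinite cardinal `κ` such that for every θ₀ⁿ-closed
`A ⊆ X` and every family `𝒰` of open sets covering `A` there is `𝒱 ⊆ 𝒰` with
`#𝒱 ≤ κ` and `A ⊆ closure (⋃₀ 𝒱)`. -/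
noncomputable def sLTheta0 (n : ℕ) (X : Type u) [TopologicalSpace X] : Cardinal.{u} :=
  sInf {κ : Cardinal.{u} | Cardinal.aleph0 ≤ κ ∧ ∀ (A : Set X) (𝒰 : Set (Set X)),
    theta0Cl n A = A → (∀ U ∈ 𝒰, IsOpen U) → A ⊆ ⋃₀ 𝒰 →
    ∃ 𝒱 ⊆ 𝒰, #𝒱 ≤ κ ∧ A ⊆ closure (⋃₀ 𝒱)}

/-- `sL_{s(n)}(X)`: the smallest infinite cardinal `κ` such that for every θⁿ-closed
`A ⊆ X` and every S(n)-cover `𝒰` with respect to `A` (i.e. `A` is covered by the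
θⁿ-interiors of members of `𝒰`) there is `𝒱 ⊆ 𝒰` with `#𝒱 ≤ κ` and
`A ⊆ closure (⋃₀ 𝒱)`. -/
noncomputable def sLs (n : ℕ) (X : Type u) [TopologicalSpace X] : Cardinal.{u} :=
  sInf {κ : Cardinal.{u} | Cardinal.aleph0 ≤ κ ∧ ∀ (A : Set X) (𝒰 : Set (Set X)),
    thetaCl n A = A → (∀ U ∈ 𝒰, IsOpen U) →
    (A ⊆ ⋃ U ∈ 𝒰, (thetaCl n Uᶜ)ᶜ) →
    ∃ 𝒱 ⊆ 𝒰, #𝒱 ≤ κ ∧ A ⊆ closure (⋃₀ 𝒱)}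

/-- `qM_{θ(n)}(X)`: the θ(n)-quasi-Menger number. -/
noncomputable def qMTheta (n : ℕ) (X : Type u) [TopologicalSpace X] : Cardinal.{u} :=
  sInf {κ : Cardinal.{u} | Cardinal.aleph0 ≤ κ ∧ ∀ A : Set X, IsClosed A →
    ∀ 𝒰 : κ.out → Set (Set X), (∀ α, ∀ U ∈ 𝒰 α, IsOpen U) →
    A ⊆ ⋃ α, ⋃₀ (𝒰 α) →
    ∃ 𝒱 : κ.out → Set (Set X), (∀ α, 𝒱 α ⊆ 𝒰 α ∧ (𝒱 α).Finite) ∧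
      A ⊆ ⋃ α, thetaCl n (⋃₀ (𝒱 α))}

/-- `qM_{θ₀(n)}(X)`: the θ₀(n)-quasi-Menger number. -/
noncomputable def qMTheta0 (n : ℕ) (X : Type u) [TopologicalSpace X] : Cardinal.{u} :=
  sInf {κ : Cardinal.{u} | Cardinal.aleph0 ≤ κ ∧ ∀ A : Set X, IsClosed A →
    ∀ 𝒰 : κ.out → Set (Set X), (∀ α, ∀ U ∈ 𝒰 α, IsOpen U) →
    A ⊆ ⋃ α, ⋃₀ (𝒰 α) →
    ∃ 𝒱 : κ.out → Set (Set X), (∀ α, 𝒱 α ⊆ 𝒰 α ∧ (𝒱 α).Finite) ∧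
      A ⊆ ⋃ α, theta0Cl n (⋃₀ (𝒱 α))}


section Aux

open Classical

variable {X : Type u} [TopologicalSpace X]

lemma isNHull_univ (n : ℕ) (A : Set X) : IsNHull n A univ :=
  ⟨fun _ => univ, fun _ _ => isOpen_univ, subset_univ _, fun _ _ => subset_univ _, rfl⟩

lemma IsNHull.interHull {n : ℕ} {A U U' : Set X} (h : IsNHull n A U) (h' : IsNHull n A U') :
    IsNHull n A (U ∩ U') := by
  obtain ⟨V, hVo, hAV, hVc, rfl⟩ := h
  obtain ⟨V', hVo', hAV', hVc', rfl⟩ := h'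
  exact ⟨fun i => V i ∩ V' i, fun i hi => (hVo i hi).inter (hVo' i hi),
    subset_inter hAV hAV', fun i hi =>
      (closure_inter_subset_inter_closure _ _).trans
        (inter_subset_inter (hVc i hi) (hVc' i hi)), rfl⟩

lemma nonempty_of_mem_thetaCl {n : ℕ} {A W : Set X} {x : X} (hx : x ∈ thetaCl n A)
    (hW : IsClosedNHull n ({x} : Set X) W) : (W ∩ A).Nonempty := by
  obtain ⟨U, ⟨V, hVo, hxV, hVc, rfl⟩, rfl⟩ := hW
  by_contra h
  exact hx ⟨V, hVo, hxV (mem_singleton x), hVc, not_nonempty_iff_eq_empty.mp h⟩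

lemma sep_lemma {n : ℕ} (hn : 0 < n) (hX : SSpace (2 * n) X) {x y : X} (hxy : x ≠ y) :
    ∃ F : Set X, IsClosedNHull n ({x} : Set X) F ∧ ∀ M : Set X, M ⊆ F → y ∉ thetaCl n M := by
  have h := hX x y hxy
  simp only [thetaCl, mem_setOf_eq, not_not] at h
  obtain ⟨U, hUo, hxU, hUc, hUy⟩ := h
  refine ⟨closure (U (n - 1)),
    ⟨U (n - 1), ⟨U, fun i hi => hUo i (by omega), singleton_subset_iff.mpr hxU,
      fun i hi => hUc i (by omega), rfl⟩, rfl⟩, ?_⟩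
  intro M hM hyM
  apply hyM
  refine ⟨fun i => (closure (U (2 * n - 1 - i)))ᶜ,
    fun i hi => isOpen_compl_iff.mpr isClosed_closure, ?_, ?_, ?_⟩
  · intro hy
    have : y ∈ closure (U (2 * n - 1)) ∩ ({y} : Set X) := by
      constructor
      · simpa using hy
      · exact rfl
    rw [hUy] at this
    exact this
  · intro i hi
    have h1 : closure (U (2 * n - 2 - i)) ⊆ U (2 * n - 1 - i) := by
      have := hUc (2 * n - 2 - i) (by omega)
      rwa [show 2 * n - 2 - i + 1 = 2 * n - 1 - i by omega] at this
    have h2 : U (2 * n - 1 - i) ⊆ interior (closure (U (2 * n - 1 - i))) :=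
      ((hUo _ (by omega)).subset_interior_iff).mpr subset_closure
    show closure ((closure (U (2 * n - 1 - i)))ᶜ) ⊆ (closure (U (2 * n - 1 - (i + 1))))ᶜ
    rw [closure_compl, show 2 * n - 1 - (i + 1) = 2 * n - 2 - i by omega]
    exact compl_subset_compl.mpr (h1.trans h2)
  · show closure ((closure (U (2 * n - 1 - (n - 1))))ᶜ) ∩ M = ∅
    rw [closure_compl, show 2 * n - 1 - (n - 1) = n by omega]
    have h1 : closure (U (n - 1)) ⊆ U n := by
      have := hUc (n - 1) (by omega)
      rwa [show n - 1 + 1 = n by omega] at this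
    have h2 : U n ⊆ interior (closure (U n)) :=
      ((hUo _ (by omega)).subset_interior_iff).mpr subset_closure
    apply eq_empty_of_subset_empty
    rintro z ⟨hz1, hz2⟩
    exact hz1 (h2 (h1 (hM hz2)))

lemma card_small_subsets {Y : Type u} {B : Set Y} {κ : Cardinal.{u}} (hκ : Cardinal.aleph0 ≤ κ)
    (hB : B.Nonempty) :
    #{T : Set Y | T ⊆ B ∧ T.Nonempty ∧ #T ≤ κ} ≤ #B ^ κ := by
  have hout : #κ.out = κ := Cardinal.mk_out κ
  haveI : Infinite κ.out := Cardinal.infinite_iff.mpr (by rw [hout]; exact hκ)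
  obtain ⟨b0, hb0⟩ := hB
  rw [← Cardinal.mk_out κ, Cardinal.power_def]
  have hmem : ∀ g : κ.out → ↥B,
      (Subtype.val '' Set.range g) ∈ {T : Set Y | T ⊆ B ∧ T.Nonempty ∧ #T ≤ #κ.out} := by
    intro g
    refine ⟨?_, ?_, ?_⟩
    · rintro t ⟨⟨t', ht'⟩, _, rfl⟩; exact ht'
    · exact ⟨(g (Classical.arbitrary _) : Y), ⟨_, mem_range_self _, rfl⟩⟩
    · exact Cardinal.mk_image_le.trans Cardinal.mk_range_le
  refine Cardinal.mk_le_of_surjective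
    (f := fun g : κ.out → ↥B => (⟨Subtype.val '' Set.range g, hmem g⟩ :
      {T : Set Y | T ⊆ B ∧ T.Nonempty ∧ #T ≤ #κ.out})) ?_
  rintro ⟨T, hTB, ⟨t0, ht0⟩, hTκ⟩
  obtain ⟨e⟩ := (Cardinal.le_def _ _).mp hTκ
  refine ⟨fun i => if h : ∃ t : ↥T, e t = i then ⟨(h.choose : Y), hTB h.choose.2⟩
    else ⟨t0, hTB ht0⟩, ?_⟩
  apply Subtype.ext
  simp only
  ext t
  constructor
  · rintro ⟨b, ⟨i, rfl⟩, rfl⟩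
    dsimp only
    split
    · next h => exact h.choose.2
    · exact ht0
  · intro ht
    have hex : ∃ t' : ↥T, e t' = e ⟨t, ht⟩ := ⟨⟨t, ht⟩, rfl⟩
    refine ⟨_, mem_range_self (e ⟨t, ht⟩), ?_⟩
    rw [dif_pos hex]
    exact congrArg Subtype.val (e.injective hex.choose_spec)

end Aux

theorem stmt0 (n : ℕ) (hn : 0 < n) (X : Type u) [TopologicalSpace X]
    (hX : SSpace (2 * n) X) (A : Set X) :
    #(thetaCl n A) ≤ #A ^ kappaTheta n X := by
  classical
  rcases A.eq_empty_or_nonempty with rfl | hA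
  · have h : thetaCl n (∅ : Set X) = ∅ := by
      ext x
      simp only [thetaCl, mem_setOf_eq, mem_empty_iff_false, iff_false, not_not]
      exact ⟨fun _ => univ, fun _ _ => isOpen_univ, mem_univ x,
        fun _ _ => subset_univ _, inter_empty _⟩
    rw [h]
    simp
  set K := kappaTheta n X with hKdef
  have hset : {κ : Cardinal.{u} | Cardinal.aleph0 ≤ κ ∧ ∀ x : X, ∃ 𝒱 : Set (Set X),
      #𝒱 ≤ κ ∧ (∀ W ∈ 𝒱, IsClosedNHull n ({x} : Set X) W) ∧
      ∀ W : Set X, IsClosedNHull n ({x} : Set X) W → ∃ B ∈ 𝒱, B ⊆ W}.Nonempty :=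
    ⟨max Cardinal.aleph0 #(Set X), le_max_left _ _, fun x =>
      ⟨{W | IsClosedNHull n ({x} : Set X) W},
        le_trans (Cardinal.mk_set_le _) (le_max_right _ _),
        fun W hW => hW, fun W hW => ⟨W, hW, subset_rfl⟩⟩⟩
  have hKmem : K ∈ _ := csInf_mem hset
  obtain ⟨hKinf, hKcov⟩ := hKmem
  choose 𝒱 h𝒱K h𝒱hull h𝒱cof using hKcov
  -- the pick function
  set pick : Set X → X := fun W => if h : (W ∩ A).Nonempty then h.choose else hA.choose
    with hpick
  have pickA : ∀ W, pick W ∈ A := by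
    intro W
    rw [hpick]
    dsimp only
    split
    · next h => exact h.choose_spec.2
    · exact hA.choose_spec
  have pickW : ∀ W, (W ∩ A).Nonempty → pick W ∈ W := by
    intro W h
    rw [hpick]
    dsimp only
    rw [dif_pos h]
    exact h.choose_spec.1
  set S : X → Set X := fun x => pick '' 𝒱 x with hS
  set Φ : X → Set (Set X) := fun x => (fun W => S x ∩ W) '' 𝒱 x with hΦ
  -- every member of 𝒱 x meets A, for x in the theta closure
  have hmeets : ∀ x, x ∈ thetaCl n A → ∀ W ∈ 𝒱 x, (W ∩ A).Nonempty :=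
    fun x hx W hW => nonempty_of_mem_thetaCl hx (h𝒱hull x W hW)
  have h𝒱ne : ∀ x : X, (𝒱 x).Nonempty := by
    intro x
    obtain ⟨B, hB, -⟩ := h𝒱cof x univ ⟨univ, isNHull_univ n _, closure_univ.symm⟩
    exact ⟨B, hB⟩
  -- directedness
  have dir : ∀ (x : X) (W F : Set X), W ∈ 𝒱 x → IsClosedNHull n ({x} : Set X) F →
      ∃ B ∈ 𝒱 x, B ⊆ W ∩ F := by
    intro x W F hW hF
    obtain ⟨U1, h1, rfl⟩ := h𝒱hull x W hW
    obtain ⟨U2, h2, rfl⟩ := hF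
    obtain ⟨B, hB, hBsub⟩ := h𝒱cof x (closure (U1 ∩ U2)) ⟨U1 ∩ U2, h1.interHull h2, rfl⟩
    exact ⟨B, hB, hBsub.trans (subset_inter (closure_mono inter_subset_left)
      (closure_mono inter_subset_right))⟩
  -- P1 : x is in the theta-closure of each trace
  have P1 : ∀ x ∈ thetaCl n A, ∀ W ∈ 𝒱 x, x ∈ thetaCl n (S x ∩ W) := by
    intro x hx W hW
    simp only [thetaCl, mem_setOf_eq]
    rintro ⟨V, hVo, hxV, hVc, hVempty⟩
    have hF : IsClosedNHull n ({x} : Set X) (closure (V (n - 1))) :=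
      ⟨V (n - 1), ⟨V, hVo, singleton_subset_iff.mpr hxV, hVc, rfl⟩, rfl⟩
    obtain ⟨B, hB, hBsub⟩ := dir x W _ hW hF
    have hp : pick B ∈ B := pickW B (hmeets x hx B hB)
    have : pick B ∈ closure (V (n - 1)) ∩ (S x ∩ W) :=
      ⟨(hBsub hp).2, ⟨B, hB, rfl⟩, (hBsub hp).1⟩
    rw [hVempty] at this
    exact this
  -- P2 : separation
  have P2 : ∀ x y : X, x ≠ y → ∃ T ∈ Φ x, y ∉ thetaCl n T := by
    intro x y hxy
    obtain ⟨F, hF, hFy⟩ := sep_lemma hn hX hxy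
    obtain ⟨W, hW, hWF⟩ := h𝒱cof x F hF
    exact ⟨S x ∩ W, ⟨W, hW, rfl⟩, hFy _ (inter_subset_right.trans hWF)⟩
  set N : Set (Set X) := {T : Set X | T ⊆ A ∧ T.Nonempty ∧ #T ≤ K} with hN
  set M : Set (Set (Set X)) := {C : Set (Set X) | C ⊆ N ∧ C.Nonempty ∧ #C ≤ K} with hM
  have hΦmem : ∀ x ∈ thetaCl n A, Φ x ∈ M := by
    intro x hx
    refine ⟨?_, ?_, ?_⟩
    · rintro T ⟨W, hW, rfl⟩
      refine ⟨?_, ?_, ?_⟩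
      · exact inter_subset_left.trans (by rintro a ⟨W', -, rfl⟩; exact pickA W')
      · exact ⟨pick W, ⟨W, hW, rfl⟩, pickW W (hmeets x hx W hW)⟩
      · exact le_trans (Cardinal.mk_le_mk_of_subset inter_subset_left)
          (le_trans Cardinal.mk_image_le (h𝒱K x))
    · exact (h𝒱ne x).image _
    · exact le_trans Cardinal.mk_image_le (h𝒱K x)
  have hinj : ∀ x ∈ thetaCl n A, ∀ y ∈ thetaCl n A, Φ x = Φ y → x = y := by
    intro x hx y hy heq
    by_contra hxy
    obtain ⟨T, hT, hyT⟩ := P2 x y hxy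
    rw [heq] at hT
    obtain ⟨W, hW, rfl⟩ := hT
    exact hyT (P1 y hy W hW)
  have step1 : #(thetaCl n A) ≤ #M := by
    refine Cardinal.mk_le_of_injective
      (f := fun x : thetaCl n A => (⟨Φ x, hΦmem x x.2⟩ : M)) ?_
    intro a b hab
    exact Subtype.ext (hinj a a.2 b b.2 (congrArg Subtype.val hab))
  have hNne : N.Nonempty :=
    ⟨{hA.choose}, singleton_subset_iff.mpr hA.choose_spec, singleton_nonempty _,
      le_trans (by simp) hKinf⟩
  have step2 : #M ≤ #N ^ K := card_small_subsets hKinf hNne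
  have step3 : #N ≤ #A ^ K := card_small_subsets hKinf hA
  calc #(thetaCl n A) ≤ #M := step1
    _ ≤ #N ^ K := step2
    _ ≤ (#A ^ K) ^ K := Cardinal.power_le_power_right step3
    _ = #A ^ (K * K) := Cardinal.power_mul.symm
    _ = #A ^ K := by rw [Cardinal.mul_eq_self hKinf]
end

section
/- Let n be a positive integer and let X be an S(2n)-space. Then |X| ≤ 2^{sL_{θ(n)}(X) · κ_{θ(n)}(X)}, where the exponent is the (cardinal) product of the two cardinal invariants. -/
open Cardinal Set

universe u

section Aux
variable {X : Type u} [TopologicalSpace X] {m : ℕ}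

lemma chainSub {U : ℕ → Set X} {n : ℕ}
    (hU : ∀ i, i + 1 < n → closure (U i) ⊆ U (i + 1)) :
    ∀ j, j < n → ∀ i, i ≤ j → U i ⊆ U j := by
  intro j
  induction j with
  | zero => intro _ i hi; rw [Nat.le_zero.mp hi]
  | succ k ih =>
    intro hk i hi
    rcases Nat.eq_or_lt_of_le hi with h | h
    · subst h; rfl
    · exact (ih (by omega) i (by omega)).trans ((subset_closure).trans (hU k hk))

lemma isNHull_mem {x : X} {W : Set X} (h : IsNHull (m + 1) {x} W) :
    x ∈ W ∧ IsOpen W := by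
  obtain ⟨V, hop, hx, hlink, rfl⟩ := h
  have hm : (m + 1) - 1 = m := rfl
  rw [hm]
  exact ⟨chainSub hlink m (by omega) 0 (by omega) (hx rfl),
    hop m (by omega)⟩

lemma isClosedNHull_mem {x : X} {W : Set X} (h : IsClosedNHull (m + 1) {x} W) :
    x ∈ W := by
  obtain ⟨U, hU, rfl⟩ := h
  exact subset_closure (isNHull_mem hU).1

lemma isClosedNHull_univ (x : X) : IsClosedNHull (m + 1) {x} (closure univ) :=
  ⟨univ, ⟨fun _ => univ, fun _ _ => isOpen_univ, subset_univ _,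
    fun _ _ => by simp, rfl⟩, rfl⟩

lemma isClosedNHull_inter {x : X} {W W' : Set X}
    (h : IsClosedNHull (m + 1) {x} W) (h' : IsClosedNHull (m + 1) {x} W') :
    ∃ W'', IsClosedNHull (m + 1) {x} W'' ∧ W'' ⊆ W ∩ W' := by
  obtain ⟨U, ⟨V, hop, hx, hl, rfl⟩, rfl⟩ := h
  obtain ⟨U', ⟨V', hop', hx', hl', rfl⟩, rfl⟩ := h'
  refine ⟨closure (V ((m+1)-1) ∩ V' ((m+1)-1)),
    ⟨V ((m+1)-1) ∩ V' ((m+1)-1), ⟨fun i => V i ∩ V' i,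
      fun i hi => (hop i hi).inter (hop' i hi),
      subset_inter hx hx', fun i hi => ?_, rfl⟩, rfl⟩, ?_⟩
  · exact subset_inter
      (((closure_mono inter_subset_left).trans (hl i hi)))
      (((closure_mono inter_subset_right).trans (hl' i hi)))
  · exact subset_inter (closure_mono inter_subset_left)
      (closure_mono inter_subset_right)

lemma mem_thetaCl_iff {x : X} {M : Set X} :
    x ∈ thetaCl (m + 1) M ↔
      ∀ W, IsClosedNHull (m + 1) {x} W → (W ∩ M).Nonempty := by
  constructor
  · intro hx W hW
    by_contra hne
    rw [Set.not_nonempty_iff_eq_empty] at hne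
    obtain ⟨U, ⟨V, hop, hxV, hl, rfl⟩, rfl⟩ := hW
    exact hx ⟨V, hop, hxV rfl, hl, hne⟩
  · intro h hbad
    obtain ⟨U, hop, hxU, hl, hend⟩ := hbad
    have hW : IsClosedNHull (m + 1) {x} (closure (U ((m+1) - 1))) :=
      ⟨U ((m+1)-1), ⟨U, hop, singleton_subset_iff.mpr hxU, hl, rfl⟩, rfl⟩
    obtain ⟨w, hw⟩ := h _ hW
    rw [hend] at hw
    exact hw

lemma subset_thetaCl (M : Set X) : M ⊆ thetaCl (m + 1) M := by
  intro x hx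
  rw [mem_thetaCl_iff]
  exact fun W hW => ⟨x, isClosedNHull_mem hW, hx⟩

lemma thetaCl_mono {M N : Set X} (h : M ⊆ N) :
    thetaCl (m + 1) M ⊆ thetaCl (m + 1) N := by
  intro x hx
  rw [mem_thetaCl_iff] at hx ⊢
  exact fun W hW => ((hx W hW).mono (inter_subset_inter_right _ h))

lemma lemA (hS : SSpace (2 * (m + 1)) X) {x z : X} (hxz : x ≠ z) :
    ∃ C D, IsClosedNHull (m + 1) {x} C ∧ IsClosedNHull (m + 1) {z} D ∧
      C ∩ D = ∅ := by
  have h := hS x z hxz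
  rw [thetaCl, mem_setOf_eq, not_not] at h
  obtain ⟨U, hop, hxU, hl, hend⟩ := h
  have hNN : 2 * (m + 1) - 1 = 2 * m + 1 := by omega
  rw [hNN] at hend
  have hz : z ∉ closure (U (2 * m + 1)) := by
    rw [Set.inter_singleton_eq_empty] at hend; exact hend
  set V : ℕ → Set X := fun i => (closure (U (2 * m + 1 - i)))ᶜ with hV
  have hopV : ∀ i, i < m + 1 → IsOpen (V i) := fun i _ =>
    isClosed_closure.isOpen_compl
  have hlV : ∀ i, i + 1 < m + 1 → closure (V i) ⊆ V (i + 1) := by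
    intro i hi
    have h1 : closure (V i) ⊆ (U (2 * m + 1 - i))ᶜ := by
      apply closure_minimal _ (hop _ (by omega)).isClosed_compl
      exact compl_subset_compl.mpr subset_closure
    refine h1.trans ?_
    rw [hV]
    simp only
    have h2 : 2 * m + 1 - i = (2 * m + 1 - (i + 1)) + 1 := by omega
    rw [h2]
    exact compl_subset_compl.mpr (hl _ (by omega))
  refine ⟨closure (U m), closure (V m),
    ⟨U m, ⟨U, fun i hi => hop i (by omega), singleton_subset_iff.mpr hxU,
      fun i hi => hl i (by omega), rfl⟩, rfl⟩,
    ⟨V m, ⟨V, hopV, singleton_subset_iff.mpr (by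
      show z ∈ (closure (U (2 * m + 1 - 0)))ᶜ
      simpa using hz),
      hlV, rfl⟩, rfl⟩, ?_⟩
  have hC : closure (U m) ⊆ U (m + 1) := hl m (by omega)
  have hD : closure (V m) ⊆ (U (m + 1))ᶜ := by
    apply closure_minimal _ (hop _ (by omega)).isClosed_compl
    have : 2 * m + 1 - m = m + 1 := by omega
    rw [hV]; simp only [this]
    exact compl_subset_compl.mpr subset_closure
  apply Set.eq_empty_of_subset_empty
  intro p hp
  exact hD hp.2 (hC hp.1)

lemma compChain {L : ℕ → Set X} (hop : ∀ i, i < m + 1 → IsOpen (L i))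
    (hl : ∀ i, i + 1 < m + 1 → closure (L i) ⊆ L (i + 1)) {y : X}
    (hy : y ∉ closure (L m)) :
    ∃ B, IsClosedNHull (m + 1) {y} B ∧ B ∩ L 0 = ∅ := by
  set N : ℕ → Set X := fun i => (closure (L (m - i)))ᶜ with hN
  have hopN : ∀ i, i < m + 1 → IsOpen (N i) := fun i _ =>
    isClosed_closure.isOpen_compl
  have hlN : ∀ i, i + 1 < m + 1 → closure (N i) ⊆ N (i + 1) := by
    intro i hi
    have h1 : closure (N i) ⊆ (L (m - i))ᶜ := by
      apply closure_minimal _ (hop _ (by omega)).isClosed_compl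
      exact compl_subset_compl.mpr subset_closure
    refine h1.trans ?_
    rw [hN]; simp only
    have h2 : m - i = (m - (i + 1)) + 1 := by omega
    rw [h2]
    exact compl_subset_compl.mpr (hl _ (by omega))
  refine ⟨closure (N m), ⟨N m, ⟨N, hopN, singleton_subset_iff.mpr (by
      show y ∈ (closure (L (m - 0)))ᶜ
      simpa using hy), hlN, rfl⟩, rfl⟩, ?_⟩
  have hD : closure (N m) ⊆ (L 0)ᶜ := by
    apply closure_minimal _ (hop _ (by omega)).isClosed_compl
    have : m - m = 0 := by omega
    rw [hN]; simp only [this]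
    exact compl_subset_compl.mpr subset_closure
  apply Set.eq_empty_of_subset_empty
  intro p hp
  exact hD hp.1 hp.2

lemma exists_fun_onto {Y : Type u} {ι : Type u} (S : Set Y) (hne : S.Nonempty)
    (hS : #S ≤ #ι) : ∃ e : ι → Y, (∀ i, e i ∈ S) ∧ ∀ y ∈ S, ∃ i, e i = y := by
  obtain ⟨f⟩ := (Cardinal.le_def _ _).mp hS
  haveI : Nonempty S := hne.to_subtype
  refine ⟨fun i => (Function.invFun f i : S).1, fun i => (Function.invFun f i).2,
    fun y hy => ?_⟩
  obtain ⟨i, hi⟩ := (Function.invFun_surjective f.injective) ⟨y, hy⟩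
  exact ⟨i, congrArg Subtype.val hi⟩

lemma card_thetaCl_le (hS : SSpace (2 * (m + 1)) X) {κ : Cardinal.{u}}
    (hκ : ℵ₀ ≤ κ) (𝒱 : X → Set (Set X)) (v1 : ∀ x, #(𝒱 x) ≤ κ)
    (v2 : ∀ x, ∀ W ∈ 𝒱 x, IsClosedNHull (m + 1) {x} W)
    (v3 : ∀ x W, IsClosedNHull (m + 1) {x} W → ∃ B ∈ 𝒱 x, B ⊆ W)
    (B : Set X) (hB : #B ≤ 2 ^ κ) : #(thetaCl (m + 1) B) ≤ 2 ^ κ := by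
  set ι := Quotient.out κ with hι
  have hικ : #ι = κ := Cardinal.mk_out κ
  set T := thetaCl (m + 1) B with hT
  have He : ∀ z : T, ∃ e : ι → Set X,
      (∀ i, e i ∈ 𝒱 z.1) ∧ ∀ W ∈ 𝒱 z.1, ∃ i, e i = W := by
    intro z
    obtain ⟨W0, hW0, _⟩ := v3 z.1 _ (isClosedNHull_univ z.1)
    exact exists_fun_onto (𝒱 z.1) ⟨W0, hW0⟩ ((v1 z.1).trans hικ.symm.le)
  choose e he1 he2 using He
  have Hf : ∀ (z : T) (i : ι), ∃ b, b ∈ e z i ∧ b ∈ B := fun z i =>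
    mem_thetaCl_iff.mp z.2 _ (v2 _ _ (he1 z i))
  choose f hf1 hf2 using Hf
  have hinj : Function.Injective
      (fun z : T => ((fun i => (⟨f z i, hf2 z i⟩ : B)),
        {p : ι × ι | e z p.2 ⊆ e z p.1})) := by
    intro z z' hzz
    simp only [Prod.mk.injEq] at hzz
    obtain ⟨h1, h2⟩ := hzz
    ext1
    by_contra hne
    obtain ⟨C, D, hC, hD, hCD⟩ := lemA hS hne
    obtain ⟨Wc, hWc, hWcC⟩ := v3 z.1 C hC
    obtain ⟨Wd, hWd, hWdD⟩ := v3 z'.1 D hD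
    obtain ⟨i0, hi0⟩ := he2 z Wc hWc
    obtain ⟨j0, hj0⟩ := he2 z' Wd hWd
    obtain ⟨W3, hW3, hW3sub⟩ := isClosedNHull_inter
      (v2 _ _ (he1 z i0)) (v2 _ _ (he1 z j0))
    obtain ⟨W'', hW'', hW''sub⟩ := v3 z.1 W3 hW3
    obtain ⟨i1, hi1⟩ := he2 z W'' hW''
    have mem1 : (i0, i1) ∈ {p : ι × ι | e z p.2 ⊆ e z p.1} := by
      simp only [mem_setOf_eq, hi1]
      exact hW''sub.trans (hW3sub.trans inter_subset_left)
    have mem2 : (j0, i1) ∈ {p : ι × ι | e z p.2 ⊆ e z p.1} := by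
      simp only [mem_setOf_eq, hi1]
      exact hW''sub.trans (hW3sub.trans inter_subset_right)
    rw [h2] at mem2
    have hval : f z i1 = f z' i1 := by
      have := congrFun h1 i1
      exact congrArg Subtype.val this
    have hv1 : f z i1 ∈ C := by
      have : f z i1 ∈ e z i0 := mem1 (hf1 z i1)
      rw [hi0] at this
      exact hWcC this
    have hv2 : f z i1 ∈ D := by
      have : f z' i1 ∈ e z' j0 := mem2 (hf1 z' i1)
      rw [hj0] at this
      rw [hval]
      exact hWdD this
    have : f z i1 ∈ C ∩ D := ⟨hv1, hv2⟩
    rw [hCD] at this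
    exact this
  have hcard := Cardinal.mk_le_of_injective hinj
  have h2κ : ℵ₀ ≤ 2 ^ κ := hκ.trans (cantor κ).le
  calc #T ≤ #((ι → B) × Set (ι × ι)) := hcard
    _ = #(ι → B) * #(Set (ι × ι)) := by
        rw [Cardinal.mk_prod, Cardinal.lift_id, Cardinal.lift_id]
    _ = (#B) ^ κ * 2 ^ (κ * κ) := by
        simp only [← Cardinal.power_def, Cardinal.mk_set, Cardinal.mk_prod,
          Cardinal.lift_id, hικ]
    _ ≤ (2 ^ κ) ^ κ * 2 ^ (κ * κ) :=
        mul_le_mul_left (Cardinal.power_le_power_right hB) _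
    _ = 2 ^ κ * 2 ^ κ := by
        rw [← Cardinal.power_mul, Cardinal.mul_eq_self hκ]
    _ = 2 ^ κ := Cardinal.mul_eq_self h2κ

end Aux

theorem stmt1 (n : ℕ) (hn : 0 < n) (X : Type u) [TopologicalSpace X]
    (hX : SSpace (2 * n) X) :
    #X ≤ 2 ^ (sLTheta n X * kappaTheta n X) := by
  rcases isEmpty_or_nonempty X with hE | hNE
  · exact (Cardinal.mk_eq_zero X).trans_le zero_le
  obtain ⟨m, rfl⟩ : ∃ m, n = m + 1 := ⟨n - 1, by omega⟩
  -- the two cardinal invariants belong to their defining sets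
  have hS1 : ℵ₀ ≤ sLTheta (m+1) X ∧ ∀ (A : Set X) (𝒰 : Set (Set X)),
      (∀ U ∈ 𝒰, IsOpen U) → thetaCl (m+1) A ⊆ ⋃₀ 𝒰 →
      ∃ 𝒱 ⊆ 𝒰, #𝒱 ≤ sLTheta (m+1) X ∧ A ⊆ closure (⋃₀ 𝒱) := by
    have hne : {κ : Cardinal.{u} | Cardinal.aleph0 ≤ κ ∧ ∀ (A : Set X) (𝒰 : Set (Set X)),
        (∀ U ∈ 𝒰, IsOpen U) → thetaCl (m+1) A ⊆ ⋃₀ 𝒰 →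
        ∃ 𝒱 ⊆ 𝒰, #𝒱 ≤ κ ∧ A ⊆ closure (⋃₀ 𝒱)}.Nonempty := by
      refine ⟨ℵ₀ ⊔ 2 ^ #X, le_sup_left, fun A 𝒰 hop hcov => ?_⟩
      exact ⟨𝒰, Subset.rfl,
        ((Cardinal.mk_set_le 𝒰).trans_eq Cardinal.mk_set).trans le_sup_right,
        ((subset_thetaCl A).trans hcov).trans subset_closure⟩
    exact csInf_mem hne
  have hS2 : ℵ₀ ≤ kappaTheta (m+1) X ∧ ∀ x : X, ∃ 𝒱 : Set (Set X),
      #𝒱 ≤ kappaTheta (m+1) X ∧ (∀ W ∈ 𝒱, IsClosedNHull (m+1) ({x} : Set X) W) ∧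
      ∀ W : Set X, IsClosedNHull (m+1) ({x} : Set X) W → ∃ B ∈ 𝒱, B ⊆ W := by
    have hne : {κ : Cardinal.{u} | Cardinal.aleph0 ≤ κ ∧ ∀ x : X, ∃ 𝒱 : Set (Set X),
        #𝒱 ≤ κ ∧ (∀ W ∈ 𝒱, IsClosedNHull (m+1) ({x} : Set X) W) ∧
        ∀ W : Set X, IsClosedNHull (m+1) ({x} : Set X) W → ∃ B ∈ 𝒱, B ⊆ W}.Nonempty := by
      refine ⟨ℵ₀ ⊔ 2 ^ #X, le_sup_left, fun x => ?_⟩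
      exact ⟨{W | IsClosedNHull (m+1) ({x} : Set X) W},
        ((Cardinal.mk_set_le _).trans_eq Cardinal.mk_set).trans le_sup_right,
        fun W hW => hW, fun W hW => ⟨W, hW, Subset.rfl⟩⟩
    exact csInf_mem hne
  set κ := sLTheta (m+1) X * kappaTheta (m+1) X with hκdef
  have hκ1 : sLTheta (m+1) X ≤ κ := by
    conv_lhs => rw [← mul_one (sLTheta (m+1) X)]
    exact mul_le_mul_right (le_trans (by norm_num) hS2.1) _
  have hκ2 : kappaTheta (m+1) X ≤ κ := by
    conv_lhs => rw [← one_mul (kappaTheta (m+1) X)]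
    exact mul_le_mul_left (le_trans (by norm_num) hS1.1) _
  have hκ : ℵ₀ ≤ κ := hS1.1.trans hκ1
  have h2κ : ℵ₀ ≤ 2 ^ κ := hκ.trans (cantor κ).le
  have hsL : ∀ (A : Set X) (𝒰 : Set (Set X)), (∀ U ∈ 𝒰, IsOpen U) →
      thetaCl (m+1) A ⊆ ⋃₀ 𝒰 → ∃ 𝒱 ⊆ 𝒰, #𝒱 ≤ κ ∧ A ⊆ closure (⋃₀ 𝒱) := by
    intro A 𝒰 hop hcov
    obtain ⟨𝒱', hs, hc, hcl⟩ := hS1.2 A 𝒰 hop hcov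
    exact ⟨𝒱', hs, hc.trans hκ1, hcl⟩
  have hth : ∀ x : X, ∃ 𝒱 : Set (Set X), #𝒱 ≤ κ ∧
      (∀ W ∈ 𝒱, IsClosedNHull (m+1) ({x} : Set X) W) ∧
      ∀ W : Set X, IsClosedNHull (m+1) ({x} : Set X) W → ∃ B ∈ 𝒱, B ⊆ W := by
    intro x
    obtain ⟨𝒱', hc, hcl, hcf⟩ := hS2.2 x
    exact ⟨𝒱', hc.trans hκ2, hcl, hcf⟩
  choose 𝒱 v1 v2 v3 using hth
  have x0 : X := Classical.arbitrary X
  -- choice of open cores of closed hulls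
  have hcoreEx : ∀ (x : X) (C : Set X), ∃ U : Set X,
      IsClosedNHull (m+1) ({x} : Set X) C →
      IsNHull (m+1) ({x} : Set X) U ∧ C = closure U := by
    intro x C
    by_cases h : IsClosedNHull (m+1) ({x} : Set X) C
    · exact ⟨h.choose, fun _ => h.choose_spec⟩
    · exact ⟨∅, fun hc => absurd hc h⟩
  choose core hcore using hcoreEx
  -- index type of size κ
  set ι := Quotient.out κ with hιdef
  have hικ : #ι = κ := Cardinal.mk_out κ
  haveI hιne : Nonempty ι := Cardinal.mk_ne_zero_iff.mp
    (by rw [hικ]; exact (Cardinal.aleph0_pos.trans_le hκ).ne')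
  -- point selector
  have hselEx : ∀ (f : ι → X) (gg : ι → Set X), ∃ p : X,
      ((closure (⋃ i, core (f i) (gg i)))ᶜ).Nonempty →
      p ∉ closure (⋃ i, core (f i) (gg i)) := by
    intro f gg
    by_cases h : ((closure (⋃ i, core (f i) (gg i)))ᶜ).Nonempty
    · exact ⟨h.choose, fun _ => h.choose_spec⟩
    · exact ⟨x0, fun hc => absurd hc h⟩
  choose sel hsel using hselEx
  -- one-step closure operator
  set g : Set X → Set X := fun B =>
    B ∪ thetaCl (m+1) B ∪ {x0} ∪
    {p | ∃ f : ι → X, ∃ gg : ι → Set X,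
      (∀ i, f i ∈ B ∧ gg i ∈ 𝒱 (f i)) ∧ p = sel f gg} with hgdef
  have hgsub : ∀ B : Set X, B ⊆ g B := by
    intro B p hp
    rw [hgdef]
    exact Or.inl (Or.inl (Or.inl hp))
  have hgx0 : ∀ B : Set X, x0 ∈ g B := by
    intro B
    rw [hgdef]
    exact Or.inl (Or.inr rfl)
  have hgθ : ∀ B : Set X, thetaCl (m+1) B ⊆ g B := by
    intro B p hp
    rw [hgdef]
    exact Or.inl (Or.inl (Or.inr hp))
  have hgsel : ∀ (B : Set X) (f : ι → X) (gg : ι → Set X),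
      (∀ i, f i ∈ B ∧ gg i ∈ 𝒱 (f i)) → sel f gg ∈ g B := by
    intro B f gg hv
    rw [hgdef]
    exact Or.inr ⟨f, gg, hv, rfl⟩
  -- transfinite iteration of length κ⁺
  set Λ := (Order.succ κ).ord with hΛdef
  haveI iwo : IsWellOrder Λ.ToType ((· < ·) : Λ.ToType → Λ.ToType → Prop) :=
    isWellOrder_lt
  have wf : WellFounded ((· < ·) : Λ.ToType → Λ.ToType → Prop) := wellFounded_lt
  set stages : Λ.ToType → Set X :=
    wf.fix (fun t rec => g (⋃ s : {s : Λ.ToType // s < t}, rec s.1 s.2)) with hsdef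
  have hstg : ∀ t : Λ.ToType, stages t = g (⋃ s : {s : Λ.ToType // s < t}, stages s.1) := by
    intro t
    rw [hsdef]
    exact wf.fix_eq _ t
  set A : Set X := ⋃ t : Λ.ToType, stages t with hAdef
  have csup : ∀ {α : Type u} (f : α → Cardinal.{u}) (c : Cardinal.{u}),
      (∀ a, f a ≤ c) → (⨆ a, f a) ≤ c := by
    intro α f c h
    rcases isEmpty_or_nonempty α with hα | hα
    · rw [ciSup_of_empty]
      exact bot_le
    · exact ciSup_le' h
  have hbound : ∀ s : Set Λ.ToType, #s ≤ κ → ∃ T : Λ.ToType, ∀ y ∈ s, y < T := by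
    intro s hs
    have hcof : (Ordinal.type ((· < ·) : Λ.ToType → Λ.ToType → Prop)).cof = Order.succ κ := by
      rw [Ordinal.type_toType, hΛdef]
      exact (Cardinal.isRegular_succ hκ).cof_eq
    by_contra hne
    push_neg at hne
    have hc := Order.cof_le (s := s) (fun a => by obtain ⟨y, hy, hay⟩ := hne a; exact ⟨y, hy, hay⟩)
    rw [Ordinal.type_toType] at hcof
    rw [Ordinal.cof_toType, hcof] at hc
    exact absurd (hs.trans_lt (Order.lt_succ κ)) (not_lt.mpr hc)
  have hmono : ∀ s t : Λ.ToType, s < t → stages s ⊆ stages t := by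
    intro s t hst
    rw [hstg t]
    exact le_trans
      (subset_iUnion (fun s : {s : Λ.ToType // s < t} => stages s.1) ⟨s, hst⟩)
      (hgsub _)
  have crit : ∀ (M : Set X) (z : X),
      z ∈ thetaCl (m+1) M ↔ ∀ W ∈ 𝒱 z, (W ∩ M).Nonempty := by
    intro M z
    constructor
    · intro hz W hW
      exact mem_thetaCl_iff.mp hz W (v2 z W hW)
    · intro h
      rw [mem_thetaCl_iff]
      intro W hW
      obtain ⟨B', hB', hsub⟩ := v3 z W hW
      exact (h B' hB').mono (inter_subset_inter_left _ hsub)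
  -- cardinality of the stages
  have hsize : ∀ t : Λ.ToType, #(stages t) ≤ 2 ^ κ := by
    intro t
    refine wf.induction (C := fun t => #(stages t) ≤ 2 ^ κ) t ?_
    intro x ih
    rw [hstg x]
    set B : Set X := ⋃ s : {s : Λ.ToType // s < x}, stages s.1 with hBdef
    have hidx : #{s : Λ.ToType // s < x} ≤ κ := by
      rw [← @Ordinal.card_typein Λ.ToType (· < ·) isWellOrder_lt x]
      have h1 : (Ordinal.typein ((· < ·) : Λ.ToType → Λ.ToType → Prop)).toRelEmbedding x
          < Λ := by
        have h0 := Ordinal.typein_lt_type ((· < ·) : Λ.ToType → Λ.ToType → Prop) x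
        rwa [Ordinal.type_toType] at h0
      have h2 := Cardinal.lt_ord.mp (h1.trans_eq hΛdef)
      exact Order.lt_succ_iff.mp h2
    have hB : #B ≤ 2 ^ κ := by
      refine (Cardinal.mk_iUnion_le _).trans ?_
      calc #{s : Λ.ToType // s < x} * ⨆ s : {s : Λ.ToType // s < x}, #(stages s.1)
          ≤ κ * 2 ^ κ := mul_le_mul' hidx (csup _ _ fun s => ih s.1 s.2)
        _ ≤ 2 ^ κ * 2 ^ κ := mul_le_mul_left (cantor κ).le _
        _ = 2 ^ κ := Cardinal.mul_eq_self h2κ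
    have hθB : #(thetaCl (m+1) B) ≤ 2 ^ κ :=
      card_thetaCl_le hX hκ 𝒱 v1 v2 v3 B hB
    have hpool : #(⋃ x ∈ B, 𝒱 x) ≤ 2 ^ κ := by
      refine (Cardinal.mk_biUnion_le 𝒱 B).trans ?_
      calc #B * ⨆ x : B, #(𝒱 x.1) ≤ 2 ^ κ * κ :=
            mul_le_mul' hB (csup _ _ fun x => v1 x.1)
        _ ≤ 2 ^ κ * 2 ^ κ := mul_le_mul_right (cantor κ).le _
        _ = 2 ^ κ := Cardinal.mul_eq_self h2κ
    have hSsel : #({p | ∃ f : ι → X, ∃ gg : ι → Set X,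
        (∀ i, f i ∈ B ∧ gg i ∈ 𝒱 (f i)) ∧ p = sel f gg} : Set X) ≤ 2 ^ κ := by
      have himg : ({p | ∃ f : ι → X, ∃ gg : ι → Set X,
          (∀ i, f i ∈ B ∧ gg i ∈ 𝒱 (f i)) ∧ p = sel f gg} : Set X) =
          (fun q : (ι → X) × (ι → Set X) => sel q.1 q.2) ''
            {q | ∀ i, q.1 i ∈ B ∧ q.2 i ∈ 𝒱 (q.1 i)} := by
        ext p
        constructor
        · rintro ⟨f, gg, hv, rfl⟩
          exact ⟨(f, gg), hv, rfl⟩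
        · rintro ⟨⟨f, gg⟩, hv, rfl⟩
          exact ⟨f, gg, hv, rfl⟩
      rw [himg]
      refine (Cardinal.mk_image_le).trans ?_
      have hinj2 : Function.Injective
          (fun q : {q : (ι → X) × (ι → Set X) //
              ∀ i, q.1 i ∈ B ∧ q.2 i ∈ 𝒱 (q.1 i)} =>
            (fun i => ((⟨q.1.1 i, (q.2 i).1⟩ : B),
              (⟨q.1.2 i, mem_iUnion₂.mpr ⟨q.1.1 i, (q.2 i).1, (q.2 i).2⟩⟩ :
                (⋃ x ∈ B, 𝒱 x))))) := by
        intro q q' h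
        apply Subtype.ext
        have h1 : q.1.1 = q'.1.1 := by
          funext i
          exact congrArg (fun z => (Prod.fst z).1) (congrFun h i)
        have h2 : q.1.2 = q'.1.2 := by
          funext i
          exact congrArg (fun z => (Prod.snd z).1) (congrFun h i)
        exact Prod.ext h1 h2
      refine (Cardinal.mk_le_of_injective hinj2).trans ?_
      calc #(ι → (B × (⋃ x ∈ B, 𝒱 x) : Type u))
          = (#(B × (⋃ x ∈ B, 𝒱 x) : Type u)) ^ κ := by
            rw [← Cardinal.power_def, hικ]
        _ = (#B * #(⋃ x ∈ B, 𝒱 x)) ^ κ := by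
            rw [Cardinal.mk_prod, Cardinal.lift_id, Cardinal.lift_id]
        _ ≤ (2 ^ κ * 2 ^ κ) ^ κ := by
            exact Cardinal.power_le_power_right (mul_le_mul' hB hpool)
        _ = (2 ^ κ) ^ κ := by rw [Cardinal.mul_eq_self h2κ]
        _ = 2 ^ κ := by rw [← Cardinal.power_mul, Cardinal.mul_eq_self hκ]
    rw [hgdef]
    refine le_trans (Cardinal.mk_union_le _ _) ?_
    refine le_trans (add_le_add_left (Cardinal.mk_union_le _ _) _) ?_
    refine le_trans (add_le_add_left
      (add_le_add_left (Cardinal.mk_union_le _ _) _) _) ?_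
    have hone : #({x0} : Set X) ≤ 2 ^ κ := by
      rw [Cardinal.mk_singleton]
      exact le_trans (by norm_num) h2κ
    calc #B + #(thetaCl (m+1) B) + #({x0} : Set X) +
        #({p | ∃ f : ι → X, ∃ gg : ι → Set X,
          (∀ i, f i ∈ B ∧ gg i ∈ 𝒱 (f i)) ∧ p = sel f gg} : Set X)
        ≤ 2 ^ κ + 2 ^ κ + 2 ^ κ + 2 ^ κ := by
          exact add_le_add (add_le_add (add_le_add hB hθB) hone) hSsel
      _ = 2 ^ κ := by
          rw [Cardinal.add_eq_self h2κ, Cardinal.add_eq_self h2κ,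
            Cardinal.add_eq_self h2κ]
  -- A is θⁿ-closed
  have hAθ : thetaCl (m+1) A ⊆ A := by
    intro z hz
    have h := (crit A z).mp hz
    have hWt : ∀ W : (𝒱 z), ∃ t : Λ.ToType, ((W : Set X) ∩ stages t).Nonempty := by
      intro W
      obtain ⟨p, hp1, hp2⟩ := h W W.2
      obtain ⟨t, ht⟩ := mem_iUnion.mp hp2
      exact ⟨t, p, hp1, ht⟩
    choose tW htW using hWt
    have hrange : #(Set.range tW) ≤ κ :=
      Cardinal.mk_range_le.trans (v1 z)
    obtain ⟨T, hT⟩ := hbound (Set.range tW) hrange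
    have hzT : z ∈ thetaCl (m+1) (⋃ s : {s : Λ.ToType // s < T}, stages s.1) := by
      refine (crit _ z).mpr ?_
      intro W hW
      refine (htW ⟨W, hW⟩).mono (inter_subset_inter_right _ ?_)
      exact subset_iUnion (fun s : {s : Λ.ToType // s < T} => stages s.1)
        ⟨tW ⟨W, hW⟩, hT _ (mem_range_self _)⟩
    have hmem : z ∈ stages T := by
      rw [hstg T]
      exact hgθ _ hzT
    exact mem_iUnion.mpr ⟨T, hmem⟩
  have hx0A : x0 ∈ A := by
    have : Nonempty Λ.ToType := by
      rw [Ordinal.toType_nonempty_iff_ne_zero, hΛdef]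
      intro hc
      rw [Cardinal.ord_eq_zero] at hc
      exact ((Cardinal.aleph0_pos.trans_le (hκ.trans (Order.le_succ κ))).ne') hc
    obtain ⟨t⟩ := this
    exact mem_iUnion.mpr ⟨t, by rw [hstg t]; exact hgx0 _⟩
  -- every point belongs to A
  have hXA : ∀ z : X, z ∈ A := by
    by_contra hzc
    push_neg at hzc
    obtain ⟨z, hz⟩ := hzc
    have hzθ : z ∉ thetaCl (m+1) A := fun h => hz (hAθ h)
    rw [thetaCl, mem_setOf_eq, not_not] at hzθ
    obtain ⟨L, hLop, hzL, hLl, hLend⟩ := hzθ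
    have hm1 : (m+1) - 1 = m := rfl
    rw [hm1] at hLend
    -- the cover
    have hUopen : ∀ U ∈ {O : Set X | ∃ x, x ∈ A ∧ ∃ C ∈ 𝒱 x,
        C ∩ L 0 = ∅ ∧ O = core x C}, IsOpen U := by
      rintro U ⟨x, hx, C, hC, hCL, rfl⟩
      exact (isNHull_mem (hcore x C (v2 x C hC)).1).2
    have hUcov : thetaCl (m+1) A ⊆ ⋃₀ {O : Set X | ∃ x, x ∈ A ∧ ∃ C ∈ 𝒱 x,
        C ∩ L 0 = ∅ ∧ O = core x C} := by
      intro y hy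
      have hyA : y ∈ A := hAθ hy
      have hyL : y ∉ closure (L m) := by
        intro hc
        have : y ∈ closure (L m) ∩ A := ⟨hc, hyA⟩
        rw [hLend] at this
        exact this
      obtain ⟨Bh, hBh, hBL⟩ := compChain hLop hLl hyL
      obtain ⟨C, hC, hCB⟩ := v3 y Bh hBh
      have hCL : C ∩ L 0 = ∅ := by
        apply Set.eq_empty_of_subset_empty
        intro p hp
        rw [← hBL]
        exact ⟨hCB hp.1, hp.2⟩
      refine ⟨core y C, ⟨y, hyA, C, hC, hCL, rfl⟩, ?_⟩
      exact (isNHull_mem (hcore y C (v2 y C hC)).1).1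
    obtain ⟨𝒱s, h𝒱sub, h𝒱card, hAcl⟩ := hsL A _ hUopen hUcov
    have h𝒱ne : 𝒱s.Nonempty := by
      by_contra hne
      rw [Set.not_nonempty_iff_eq_empty] at hne
      rw [hne] at hAcl
      simp only [sUnion_empty, closure_empty] at hAcl
      exact hAcl hx0A
    obtain ⟨es, hes1, hes2⟩ := exists_fun_onto (ι := ι) 𝒱s h𝒱ne
      (h𝒱card.trans hικ.symm.le)
    have hesU : ∀ i, ∃ x, x ∈ A ∧ ∃ C ∈ 𝒱 x, C ∩ L 0 = ∅ ∧ es i = core x C :=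
      fun i => h𝒱sub (hes1 i)
    choose xs hxsA Cs hCs hCsL hes using hesU
    have hxst : ∀ i, ∃ t, xs i ∈ stages t := fun i => mem_iUnion.mp (hxsA i)
    choose ts hts using hxst
    obtain ⟨T, hT⟩ := hbound (Set.range ts)
      (Cardinal.mk_range_le.trans hικ.le)
    have hvalid : ∀ i, xs i ∈ (⋃ s : {s : Λ.ToType // s < T}, stages s.1) ∧
        Cs i ∈ 𝒱 (xs i) := by
      intro i
      exact ⟨mem_iUnion.mpr ⟨⟨ts i, hT _ (mem_range_self i)⟩, hts i⟩, hCs i⟩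
    have hzR : z ∉ closure (⋃ i, core (xs i) (Cs i)) := by
      intro hc
      obtain ⟨p, hpL, hpU⟩ := mem_closure_iff.mp hc (L 0) (hLop 0 (by omega)) hzL
      obtain ⟨i, hpi⟩ := mem_iUnion.mp hpU
      have hpC : p ∈ Cs i := by
        rw [(hcore (xs i) (Cs i) (v2 _ _ (hCs i))).2]
        exact subset_closure hpi
      have : p ∈ Cs i ∩ L 0 := ⟨hpC, hpL⟩
      rw [hCsL i] at this
      exact this
    have hmemsel : sel xs Cs ∈ A := by
      refine mem_iUnion.mpr ⟨T, ?_⟩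
      rw [hstg T]
      exact hgsel _ xs Cs hvalid
    have hselR : sel xs Cs ∉ closure (⋃ i, core (xs i) (Cs i)) :=
      hsel xs Cs ⟨z, hzR⟩
    have hAR : A ⊆ closure (⋃ i, core (xs i) (Cs i)) := by
      refine hAcl.trans (closure_mono ?_)
      rintro p ⟨V, hV, hpV⟩
      obtain ⟨i, rfl⟩ := hes2 V hV
      rw [hes i] at hpV
      exact mem_iUnion.mpr ⟨i, hpV⟩
    exact hselR (hAR hmemsel)
  -- cardinality count
  have hAuniv : A = Set.univ := eq_univ_of_forall hXA
  have hι'card : #(Λ.ToType) = Order.succ κ := by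
    rw [Cardinal.mk_toType, hΛdef, Cardinal.card_ord]
  calc #X = #(A : Set X) := by rw [hAuniv]; exact Cardinal.mk_univ.symm
    _ ≤ #(Λ.ToType) * ⨆ t, #(stages t) := Cardinal.mk_iUnion_le _
    _ ≤ (Order.succ κ) * 2 ^ κ := by
        rw [hι'card]
        exact mul_le_mul_right (csup _ _ hsize) _
    _ ≤ 2 ^ κ * 2 ^ κ := mul_le_mul_left (Order.succ_le_of_lt (cantor κ)) _
    _ = 2 ^ κ := Cardinal.mul_eq_self h2κ
end

section
/- Let X be a Urysohn space (any two distinct points of X have disjoint closed neighborhoods). Then |X| ≤ 2^{sL_θ(X) · κ_θ(X)}, where the exponent is the (cardinal) product of the two cardinal invariants. -/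
open Cardinal Set

universe u

namespace Stmt2Proof

variable {X : Type u} [TopologicalSpace X]

lemma mem_thetaCl_one {M : Set X} {x : X} :
    x ∈ thetaCl 1 M ↔ ∀ U : Set X, IsOpen U → x ∈ U → (closure U ∩ M).Nonempty := by
  constructor
  · intro hx U hU hxU
    rw [Set.nonempty_iff_ne_empty]
    intro hemp
    exact hx ⟨fun _ => U, fun i _ => hU, hxU, fun i hi => absurd hi (by omega), hemp⟩
  · rintro h ⟨U, hop, hx0, _, hemp⟩
    have h2 := h (U 0) (hop 0 (by omega)) hx0
    rw [Set.nonempty_iff_ne_empty] at h2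
    exact h2 hemp

lemma subset_thetaCl_one (M : Set X) : M ⊆ thetaCl 1 M := by
  intro x hx
  rw [mem_thetaCl_one]
  exact fun U hU hxU => ⟨x, subset_closure hxU, hx⟩

lemma thetaCl_one_mono {M N : Set X} (h : M ⊆ N) : thetaCl 1 M ⊆ thetaCl 1 N := by
  intro x hx
  rw [mem_thetaCl_one] at hx ⊢
  intro U hU hxU
  obtain ⟨p, hp1, hp2⟩ := hx U hU hxU
  exact ⟨p, hp1, h hp2⟩

lemma isClosedNHull_one {x : X} {W : Set X} :
    IsClosedNHull 1 ({x} : Set X) W ↔ ∃ U : Set X, IsOpen U ∧ x ∈ U ∧ W = closure U := by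
  constructor
  · rintro ⟨U, ⟨V, hop, hsub, _, hUV⟩, rfl⟩
    refine ⟨U, ?_, ?_, rfl⟩
    · rw [hUV]; exact hop (1 - 1) (by omega)
    · rw [hUV]; exact hsub rfl
  · rintro ⟨U, hU, hxU, rfl⟩
    exact ⟨U, ⟨fun _ => U, fun i _ => hU, singleton_subset_iff.mpr hxU,
      fun i hi => absurd hi (by omega), rfl⟩, rfl⟩

open scoped Classical in
noncomputable def hull (x : X) (W : Set X) : Set X :=
  if h : ∃ U : Set X, IsOpen U ∧ x ∈ U ∧ W = closure U then h.choose else ∅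

lemma hull_spec {x : X} {W : Set X} (h : IsClosedNHull 1 ({x} : Set X) W) :
    IsOpen (hull x W) ∧ x ∈ hull x W ∧ W = closure (hull x W) := by
  classical
  have h' := isClosedNHull_one.mp h
  rw [hull, dif_pos h']
  exact h'.choose_spec

/-- All the data needed for the main construction. -/
structure Setup (X : Type u) [TopologicalSpace X] (κ : Cardinal.{u}) where
  hκ : ℵ₀ ≤ κ
  ury : ∀ x y : X, x ≠ y → ∃ U V : Set X, IsOpen U ∧ IsOpen V ∧ x ∈ U ∧ y ∈ V ∧
      closure U ∩ closure V = ∅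
  V : X → Set (Set X)
  hVcard : ∀ x, #(V x) ≤ κ
  hVmem : ∀ x, ∀ W ∈ V x, IsClosedNHull 1 ({x} : Set X) W
  hVcof : ∀ x, ∀ W : Set X, IsClosedNHull 1 ({x} : Set X) W → ∃ B ∈ V x, B ⊆ W
  sl : ∀ (A : Set X) (𝒰 : Set (Set X)), (∀ U ∈ 𝒰, IsOpen U) → thetaCl 1 A ⊆ ⋃₀ 𝒰 →
      ∃ 𝒱 ⊆ 𝒰, #𝒱 ≤ κ ∧ A ⊆ closure (⋃₀ 𝒱)

variable {κ : Cardinal.{u}}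

lemma Setup.V_nonempty (S : Setup X κ) (x : X) : (S.V x).Nonempty := by
  obtain ⟨W, hW, -⟩ := S.hVcof x (closure univ)
    (isClosedNHull_one.mpr ⟨univ, isOpen_univ, mem_univ x, rfl⟩)
  exact ⟨W, hW⟩

lemma Setup.mem_thetaCl_iff (S : Setup X κ) {M : Set X} {x : X} :
    x ∈ thetaCl 1 M ↔ ∀ W ∈ S.V x, (W ∩ M).Nonempty := by
  constructor
  · intro hx W hW
    obtain ⟨ho, hxo, hWc⟩ := hull_spec (S.hVmem x W hW)
    have h2 := mem_thetaCl_one.mp hx (hull x W) ho hxo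
    rwa [← hWc] at h2
  · intro h
    rw [mem_thetaCl_one]
    intro U hU hxU
    obtain ⟨W, hWmem, hWsub⟩ := S.hVcof x (closure U)
      (isClosedNHull_one.mpr ⟨U, hU, hxU, rfl⟩)
    obtain ⟨p, hpW, hpM⟩ := h W hWmem
    exact ⟨p, hWsub hpW, hpM⟩

/-- Key cardinality lemma: the θ-closure of a set of size at most `2 ^ κ` has size
at most `2 ^ κ`. -/
lemma Setup.card_thetaCl_le (S : Setup X κ) {B : Set X} (hB : #B ≤ 2 ^ κ) :
    #(thetaCl 1 B) ≤ 2 ^ κ := by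
  classical
  have hsurj : ∀ x : X, ∃ e : κ.out → ↥(S.V x), Function.Surjective e := by
    intro x
    have h0 : Nonempty ↥(S.V x) := (S.V_nonempty x).to_subtype
    have h1 : #↥(S.V x) ≤ #κ.out := by rw [Cardinal.mk_out]; exact S.hVcard x
    obtain ⟨f⟩ := (Cardinal.le_def _ _).mp h1
    exact ⟨Function.invFun f, Function.invFun_surjective f.injective⟩
  choose e he using hsurj
  have hpick : ∀ y : X, y ∈ thetaCl 1 B → ∀ i j : κ.out,
      ∃ p : X, p ∈ B ∧ p ∈ ((e y i : Set X)) ∧ p ∈ ((e y j : Set X)) := by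
    intro y hy i j
    have hi' := hull_spec (S.hVmem y _ (e y i).2)
    have hj' := hull_spec (S.hVmem y _ (e y j).2)
    have hcl : IsClosedNHull 1 ({y} : Set X)
        (closure (hull y (e y i : Set X) ∩ hull y (e y j : Set X))) :=
      isClosedNHull_one.mpr ⟨_, hi'.1.inter hj'.1, ⟨hi'.2.1, hj'.2.1⟩, rfl⟩
    obtain ⟨W, hWmem, hWsub⟩ := S.hVcof y _ hcl
    obtain ⟨p, hpW, hpB⟩ := (S.mem_thetaCl_iff.mp hy) W hWmem
    have hps := hWsub hpW
    have h1 : p ∈ closure (hull y (e y i : Set X)) :=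
      closure_mono inter_subset_left hps
    have h2 : p ∈ closure (hull y (e y j : Set X)) :=
      closure_mono inter_subset_right hps
    rw [← hi'.2.2] at h1
    rw [← hj'.2.2] at h2
    exact ⟨p, hpB, h1, h2⟩
  choose p hpB hp1 hp2 using hpick
  set G : ↥(thetaCl 1 B) → (κ.out × κ.out → ↥B) :=
    fun y ij => ⟨p y.1 y.2 ij.1 ij.2, hpB y.1 y.2 ij.1 ij.2⟩ with hGdef
  have hGinj : Function.Injective G := by
    intro y y' hyy'
    by_contra hne
    have hne' : (y : X) ≠ (y' : X) := fun h => hne (Subtype.ext h)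
    obtain ⟨P, Q, hP, hQ, hyP, hy'Q, hPQ⟩ := S.ury _ _ hne'
    obtain ⟨W, hWmem, hWsub⟩ := S.hVcof y (closure P)
      (isClosedNHull_one.mpr ⟨P, hP, hyP, rfl⟩)
    obtain ⟨W', hW'mem, hW'sub⟩ := S.hVcof y' (closure Q)
      (isClosedNHull_one.mpr ⟨Q, hQ, hy'Q, rfl⟩)
    obtain ⟨i, hi⟩ := he y ⟨W, hWmem⟩
    obtain ⟨j, hj⟩ := he y' ⟨W', hW'mem⟩
    have h1 : p y.1 y.2 i j ∈ W := by
      have := hp1 y.1 y.2 i j; rw [hi] at this; exact this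
    have h2 : p y'.1 y'.2 i j ∈ W' := by
      have := hp2 y'.1 y'.2 i j; rw [hj] at this; exact this
    have heq : p y.1 y.2 i j = p y'.1 y'.2 i j :=
      congrArg Subtype.val (congrFun hyy' (i, j))
    have hmem : p y.1 y.2 i j ∈ closure P ∩ closure Q :=
      ⟨hWsub h1, by rw [heq]; exact hW'sub h2⟩
    rw [hPQ] at hmem
    exact hmem
  calc #↥(thetaCl 1 B) ≤ #(κ.out × κ.out → ↥B) := Cardinal.mk_le_of_injective hGinj
    _ = #↥B ^ #(κ.out × κ.out) := (Cardinal.power_def _ _).symm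
    _ = #↥B ^ (κ * κ) := by rw [Cardinal.mk_prod, Cardinal.mk_out, Cardinal.lift_id]
    _ = #↥B ^ κ := by rw [Cardinal.mul_eq_self S.hκ]
    _ ≤ (2 ^ κ) ^ κ := Cardinal.power_le_power_right hB
    _ = 2 ^ (κ * κ) := by rw [← Cardinal.power_mul]
    _ = 2 ^ κ := by rw [Cardinal.mul_eq_self S.hκ]

/-- The family of chosen open hulls of points of `B`. -/
def Setup.hulls (S : Setup X κ) (B : Set X) : Set (Set X) :=
  {O | ∃ x ∈ B, ∃ W ∈ S.V x, O = hull x W}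

lemma Setup.hulls_mono (S : Setup X κ) {B B' : Set X} (h : B ⊆ B') :
    S.hulls B ⊆ S.hulls B' := by
  rintro O ⟨x, hx, W, hW, rfl⟩
  exact ⟨x, h hx, W, hW, rfl⟩

lemma Setup.card_hulls_le (S : Setup X κ) {B : Set X} (hB : #B ≤ 2 ^ κ) :
    #(S.hulls B) ≤ 2 ^ κ := by
  have hf : Function.Surjective
      (fun q : (Σ x : ↥B, ↥(S.V x.1)) =>
        (⟨hull q.1.1 q.2.1, ⟨q.1.1, q.1.2, q.2.1, q.2.2, rfl⟩⟩ : ↥(S.hulls B))) := by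
    rintro ⟨O, x, hx, W, hW, rfl⟩
    exact ⟨⟨⟨x, hx⟩, ⟨W, hW⟩⟩, rfl⟩
  have h2κ : ℵ₀ ≤ 2 ^ κ := S.hκ.trans (Cardinal.cantor κ).le
  refine (Cardinal.mk_le_of_surjective hf).trans ?_
  calc #(Σ x : ↥B, ↥(S.V x.1)) = Cardinal.sum (fun x : ↥B => #↥(S.V x.1)) :=
        Cardinal.mk_sigma _
    _ ≤ Cardinal.sum (fun _ : ↥B => κ) := Cardinal.sum_le_sum _ _ fun x => S.hVcard x.1
    _ = #↥B * κ := Cardinal.sum_const' _ _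
    _ ≤ 2 ^ κ * 2 ^ κ := mul_le_mul' hB (Cardinal.cantor κ).le
    _ = 2 ^ κ := Cardinal.mul_eq_self h2κ

open scoped Classical in
/-- A point outside `closure (⋃₀ ℬ)`, whenever one exists. -/
noncomputable def wpt [Nonempty X] (ℬ : Set (Set X)) : X :=
  if h : ∃ z : X, z ∉ closure (⋃₀ ℬ) then h.choose else Classical.arbitrary X

lemma wpt_not_mem [Nonempty X] {ℬ : Set (Set X)} (h : closure (⋃₀ ℬ) ≠ Set.univ) :
    wpt ℬ ∉ closure (⋃₀ ℬ) := by
  classical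
  have hex : ∃ z : X, z ∉ closure (⋃₀ ℬ) := (ne_univ_iff_exists_notMem _).mp h
  rw [wpt, dif_pos hex]
  exact hex.choose_spec

/-- One step of the closing-off construction. -/
noncomputable def Setup.nextSet [Nonempty X] (S : Setup X κ) (B : Set X) : Set X :=
  thetaCl 1 B ∪ wpt ''
    {ℬ : Set (Set X) | ℬ ⊆ S.hulls B ∧ #↥ℬ ≤ κ ∧ closure (⋃₀ ℬ) ≠ Set.univ}

lemma Setup.subset_nextSet [Nonempty X] (S : Setup X κ) (B : Set X) :
    B ⊆ S.nextSet B :=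
  (subset_thetaCl_one B).trans subset_union_left

lemma Setup.thetaCl_subset_nextSet [Nonempty X] (S : Setup X κ) (B : Set X) :
    thetaCl 1 B ⊆ S.nextSet B := subset_union_left

lemma Setup.wpt_mem_nextSet [Nonempty X] (S : Setup X κ) {B : Set X} {ℬ : Set (Set X)}
    (h1 : ℬ ⊆ S.hulls B) (h2 : #↥ℬ ≤ κ) (h3 : closure (⋃₀ ℬ) ≠ Set.univ) :
    wpt ℬ ∈ S.nextSet B :=
  mem_union_right _ ⟨ℬ, ⟨h1, h2, h3⟩, rfl⟩

lemma Setup.card_nextSet_le [Nonempty X] (S : Setup X κ) {B : Set X} (hB : #B ≤ 2 ^ κ) :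
    #(S.nextSet B) ≤ 2 ^ κ := by
  have h2κ : ℵ₀ ≤ 2 ^ κ := S.hκ.trans (Cardinal.cantor κ).le
  refine (Cardinal.mk_union_le _ _).trans ?_
  have hA := S.card_thetaCl_le hB
  have hBc : #↥(wpt ''
      {ℬ : Set (Set X) | ℬ ⊆ S.hulls B ∧ #↥ℬ ≤ κ ∧ closure (⋃₀ ℬ) ≠ Set.univ}) ≤ 2 ^ κ := by
    refine Cardinal.mk_image_le.trans ?_
    have hsub : {ℬ : Set (Set X) | ℬ ⊆ S.hulls B ∧ #↥ℬ ≤ κ ∧ closure (⋃₀ ℬ) ≠ Set.univ} ⊆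
        {ℬ : Set (Set X) | ℬ ⊆ S.hulls B ∧ #↥ℬ ≤ κ} := fun ℬ hℬ => ⟨hℬ.1, hℬ.2.1⟩
    refine (Cardinal.mk_le_mk_of_subset hsub).trans ?_
    refine (Cardinal.mk_bounded_subset_le (S.hulls B) κ).trans ?_
    calc max #↥(S.hulls B) ℵ₀ ^ κ ≤ (2 ^ κ) ^ κ :=
          Cardinal.power_le_power_right (max_le (S.card_hulls_le hB) h2κ)
      _ = 2 ^ (κ * κ) := by rw [← Cardinal.power_mul]
      _ = 2 ^ κ := by rw [Cardinal.mul_eq_self S.hκ]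
  calc #↥(thetaCl 1 B) + _ ≤ 2 ^ κ + 2 ^ κ := add_le_add hA hBc
    _ = 2 ^ κ := Cardinal.add_eq_self h2κ

/-- The index type for the transfinite construction: a well-order of type `(κ⁺).ord`. -/
abbrev SI (κ : Cardinal.{u}) : Type u := (Order.succ κ).ord.ToType

lemma card_Iio_le (κ : Cardinal.{u}) (j : SI κ) : #(Iio j) ≤ κ :=
  Order.lt_succ_iff.mp (Cardinal.mk_Iio_ord_toType j)

lemma SI_wf (κ : Cardinal.{u}) : WellFounded ((· < ·) : SI κ → SI κ → Prop) :=
  IsWellFounded.wf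

lemma bounded_of_small (hκ : ℵ₀ ≤ κ) {s : Set (SI κ)} (hs : #s ≤ κ) :
    ∃ a : SI κ, ∀ b ∈ s, b < a := by
  by_contra h
  push_neg at h
  have hub : Set.Unbounded (· < ·) s := by
    intro a
    obtain ⟨b, hb1, hb2⟩ := h a
    exact ⟨b, hb1, not_lt.mpr hb2⟩
  letI inst : IsWellOrder (SI κ) (· < ·) := @isWellOrder_lt (SI κ) inferInstance inferInstance
  have h1 := Order.cof_le (s := s) (fun a => let ⟨b, hb1, hb2⟩ := hub a; ⟨b, hb1, not_lt.mp hb2⟩)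
  rw [Ordinal.cof_toType, (Cardinal.isRegular_succ hκ).cof_ord] at h1
  exact absurd (h1.trans hs) (Order.lt_succ κ).not_ge

variable [Nonempty X]

/-- The transfinite chain of sets. -/
noncomputable def Setup.stage (S : Setup X κ) : SI κ → Set X :=
  (SI_wf κ).fix (fun j ih => S.nextSet (⋃ i : Iio j, ih i.1 i.2))

lemma Setup.stage_eq (S : Setup X κ) (j : SI κ) :
    S.stage j = S.nextSet (⋃ i : Iio j, S.stage i.1) :=
  WellFounded.fix_eq _ _ j

lemma Setup.stage_mono (S : Setup X κ) {i j : SI κ} (h : i ≤ j) :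
    S.stage i ⊆ S.stage j := by
  rcases eq_or_lt_of_le h with rfl | hlt
  · exact subset_rfl
  · rw [S.stage_eq j]
    exact (Set.subset_iUnion (fun i : Iio j => S.stage i.1) ⟨i, hlt⟩).trans
      (S.subset_nextSet _)

lemma Setup.card_stage_le (S : Setup X κ) : ∀ j : SI κ, #(S.stage j) ≤ 2 ^ κ := by
  intro j
  induction j using WellFounded.induction (SI_wf κ) with
  | _ j ih =>
    rw [S.stage_eq j]
    apply S.card_nextSet_le
    have h2κ : ℵ₀ ≤ 2 ^ κ := S.hκ.trans (Cardinal.cantor κ).le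
    calc #(⋃ i : Iio j, S.stage i.1)
        ≤ Cardinal.sum (fun i : Iio j => #(S.stage i.1)) := Cardinal.mk_iUnion_le_sum_mk
      _ ≤ Cardinal.sum (fun _ : Iio j => 2 ^ κ) :=
          Cardinal.sum_le_sum _ _ fun i => ih i.1 i.2
      _ = #(Iio j) * 2 ^ κ := Cardinal.sum_const' _ _
      _ ≤ 2 ^ κ * 2 ^ κ :=
          mul_le_mul' ((card_Iio_le κ j).trans (Cardinal.cantor κ).le) le_rfl
      _ = 2 ^ κ := Cardinal.mul_eq_self h2κ

/-- The union of the chain. -/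
noncomputable def Setup.Hset (S : Setup X κ) : Set X := ⋃ j : SI κ, S.stage j

lemma Setup.stage_subset_Hset (S : Setup X κ) (j : SI κ) : S.stage j ⊆ S.Hset :=
  Set.subset_iUnion (fun j : SI κ => S.stage j) j

lemma Setup.card_Hset_le (S : Setup X κ) : #S.Hset ≤ 2 ^ κ := by
  have h2κ : ℵ₀ ≤ 2 ^ κ := S.hκ.trans (Cardinal.cantor κ).le
  calc #S.Hset ≤ Cardinal.sum (fun j : SI κ => #(S.stage j)) := Cardinal.mk_iUnion_le_sum_mk
    _ ≤ Cardinal.sum (fun _ : SI κ => 2 ^ κ) :=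
        Cardinal.sum_le_sum _ _ fun j => S.card_stage_le j
    _ = #(SI κ) * 2 ^ κ := Cardinal.sum_const' _ _
    _ ≤ 2 ^ κ * 2 ^ κ := by
        refine mul_le_mul' ?_ le_rfl
        rw [Cardinal.mk_toType, Cardinal.card_ord]
        exact Order.succ_le_iff.mpr (Cardinal.cantor κ)
    _ = 2 ^ κ := Cardinal.mul_eq_self h2κ

lemma Setup.thetaCl_Hset_subset (S : Setup X κ) : thetaCl 1 S.Hset ⊆ S.Hset := by
  intro y hy
  have h1 : ∀ w : ↥(S.V y), ∃ j : SI κ, ((w : Set X) ∩ S.stage j).Nonempty := by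
    rintro ⟨W, hW⟩
    obtain ⟨pt, hp1, hp2⟩ := (S.mem_thetaCl_iff.mp hy) W hW
    obtain ⟨t, ⟨j, rfl⟩, hj⟩ := hp2
    exact ⟨j, pt, hp1, hj⟩
  choose jf hjf using h1
  have hr : #(range jf) ≤ κ := Cardinal.mk_range_le.trans (S.hVcard y)
  obtain ⟨j₀, hj₀⟩ := bounded_of_small S.hκ hr
  have hmem : y ∈ thetaCl 1 (⋃ i : Iio j₀, S.stage i.1) := by
    rw [S.mem_thetaCl_iff]
    intro W hW
    obtain ⟨pt, hp1, hp2⟩ := hjf ⟨W, hW⟩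
    refine ⟨pt, hp1, ?_⟩
    exact Set.subset_iUnion (fun i : Iio j₀ => S.stage i.1)
      ⟨jf ⟨W, hW⟩, hj₀ _ (mem_range_self _)⟩ hp2
  have := S.thetaCl_subset_nextSet (⋃ i : Iio j₀, S.stage i.1) hmem
  rw [← S.stage_eq j₀] at this
  exact S.stage_subset_Hset j₀ this

lemma Setup.thetaCl_Hset (S : Setup X κ) : thetaCl 1 S.Hset = S.Hset :=
  le_antisymm S.thetaCl_Hset_subset (subset_thetaCl_one _)

lemma Setup.Hset_eq_univ (S : Setup X κ) : S.Hset = Set.univ := by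
  classical
  by_contra hne
  obtain ⟨q, hq⟩ := (ne_univ_iff_exists_notMem _).mp hne
  have hq' : q ∉ thetaCl 1 S.Hset := by rw [S.thetaCl_Hset]; exact hq
  rw [mem_thetaCl_one] at hq'
  push_neg at hq'
  obtain ⟨P, hPopen, hqP, hPH⟩ := hq'
  set 𝒰 : Set (Set X) :=
    {O | ∃ y ∈ S.Hset, ∃ W ∈ S.V y, W ∩ P = ∅ ∧ O = hull y W} with h𝒰
  have hUopen : ∀ U ∈ 𝒰, IsOpen U := by
    rintro U ⟨y, hy, W, hW, hWP, rfl⟩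
    exact (hull_spec (S.hVmem y W hW)).1
  have hUcover : thetaCl 1 S.Hset ⊆ ⋃₀ 𝒰 := by
    rw [S.thetaCl_Hset]
    intro y hy
    have hynP : y ∉ closure P := by
      intro hc
      have h3 : y ∈ closure P ∩ S.Hset := ⟨hc, hy⟩
      rw [hPH] at h3; exact h3
    have hcl : IsClosedNHull 1 ({y} : Set X) (closure (closure P)ᶜ) :=
      isClosedNHull_one.mpr ⟨(closure P)ᶜ, isClosed_closure.isOpen_compl, hynP, rfl⟩
    obtain ⟨W, hWmem, hWsub⟩ := S.hVcof y _ hcl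
    have hWP : W ∩ P = ∅ := by
      rw [Set.eq_empty_iff_forall_notMem]
      rintro u ⟨huW, huP⟩
      obtain ⟨v, hvP, hvR⟩ := mem_closure_iff.mp (hWsub huW) P hPopen huP
      exact hvR (subset_closure hvP)
    exact ⟨hull y W, ⟨y, hy, W, hWmem, hWP, rfl⟩, (hull_spec (S.hVmem y W hWmem)).2.1⟩
  obtain ⟨𝒱, h𝒱𝒰, h𝒱card, hHsub⟩ := S.sl S.Hset 𝒰 hUopen hUcover
  have hdisj : P ∩ ⋃₀ 𝒱 = ∅ := by
    rw [Set.eq_empty_iff_forall_notMem]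
    rintro u ⟨huP, O, hO, huO⟩
    obtain ⟨y, hy, W, hW, hWP, rfl⟩ := h𝒱𝒰 hO
    have huW : u ∈ W := (hull_spec (S.hVmem y W hW)).2.2 ▸ subset_closure huO
    have h4 : u ∈ W ∩ P := ⟨huW, huP⟩
    rw [hWP] at h4; exact h4
  have hqcl : q ∉ closure (⋃₀ 𝒱) := by
    intro hc
    obtain ⟨v, hv⟩ := mem_closure_iff.mp hc P hPopen hqP
    rw [hdisj] at hv; exact hv
  have hnuniv : closure (⋃₀ 𝒱) ≠ Set.univ := fun h => hqcl (h ▸ mem_univ q)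
  have hOdata : ∀ O : ↥𝒱, ∃ j : SI κ, (O : Set X) ∈ S.hulls (S.stage j) := by
    rintro ⟨O, hO⟩
    obtain ⟨y, hy, W, hW, hWP, rfl⟩ := h𝒱𝒰 hO
    obtain ⟨j, hj⟩ := Set.mem_iUnion.mp hy
    exact ⟨j, y, hj, W, hW, rfl⟩
  choose jO hjO using hOdata
  have hr : #(range jO) ≤ κ := Cardinal.mk_range_le.trans h𝒱card
  obtain ⟨j₀, hj₀⟩ := bounded_of_small S.hκ hr
  have h𝒱hulls : 𝒱 ⊆ S.hulls (⋃ i : Iio j₀, S.stage i.1) := by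
    intro O hO
    refine S.hulls_mono ?_ (hjO ⟨O, hO⟩)
    exact Set.subset_iUnion (fun i : Iio j₀ => S.stage i.1)
      ⟨jO ⟨O, hO⟩, hj₀ _ (mem_range_self _)⟩
  have hw := S.wpt_mem_nextSet h𝒱hulls h𝒱card hnuniv
  rw [← S.stage_eq j₀] at hw
  exact wpt_not_mem hnuniv (hHsub (S.stage_subset_Hset j₀ hw))

end Stmt2Proof


lemma Stmt2Proof.Setup.card_le {X : Type u} [TopologicalSpace X] {κ : Cardinal.{u}}
    (S : Stmt2Proof.Setup X κ) : #X ≤ 2 ^ κ := by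
  rcases isEmpty_or_nonempty X with h | h
  · haveI := h
    rw [Cardinal.mk_eq_zero X]
    exact zero_le
  · haveI := h
    have h2 := S.card_Hset_le
    rw [S.Hset_eq_univ, Cardinal.mk_univ] at h2
    exact h2

theorem stmt2 (X : Type u) [TopologicalSpace X]
    (hX : ∀ x y : X, x ≠ y → ∃ U V : Set X, IsOpen U ∧ IsOpen V ∧ x ∈ U ∧ y ∈ V ∧
      closure U ∩ closure V = ∅) :
    #X ≤ 2 ^ (sLTheta 1 X * kappaTheta 1 X) := by
  classical
  have hmem₁ : sLTheta 1 X ∈ {κ : Cardinal.{u} | Cardinal.aleph0 ≤ κ ∧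
      ∀ (A : Set X) (𝒰 : Set (Set X)),
      (∀ U ∈ 𝒰, IsOpen U) → thetaCl 1 A ⊆ ⋃₀ 𝒰 →
      ∃ 𝒱 ⊆ 𝒰, #𝒱 ≤ κ ∧ A ⊆ closure (⋃₀ 𝒱)} := by
    apply csInf_mem
    refine ⟨max ℵ₀ (2 ^ #X), le_max_left _ _, ?_⟩
    intro A 𝒰 hop hcov
    refine ⟨𝒰, subset_rfl, ?_,
      (Stmt2Proof.subset_thetaCl_one A).trans (hcov.trans subset_closure)⟩
    refine le_trans (Cardinal.mk_set_le 𝒰) ?_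
    rw [Cardinal.mk_set]
    exact le_max_right _ _
  have hmem₂ : kappaTheta 1 X ∈ {κ : Cardinal.{u} | Cardinal.aleph0 ≤ κ ∧
      ∀ x : X, ∃ 𝒱 : Set (Set X),
      #𝒱 ≤ κ ∧ (∀ W ∈ 𝒱, IsClosedNHull 1 ({x} : Set X) W) ∧
      ∀ W : Set X, IsClosedNHull 1 ({x} : Set X) W → ∃ B ∈ 𝒱, B ⊆ W} := by
    apply csInf_mem
    refine ⟨max ℵ₀ (2 ^ #X), le_max_left _ _, fun x =>
      ⟨{W | IsClosedNHull 1 ({x} : Set X) W}, ?_, fun W hW => hW,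
        fun W hW => ⟨W, hW, subset_rfl⟩⟩⟩
    refine le_trans (Cardinal.mk_set_le _) ?_
    rw [Cardinal.mk_set]
    exact le_max_right _ _
  obtain ⟨ha₁, hsl⟩ := hmem₁
  obtain ⟨ha₂, hkt⟩ := hmem₂
  have hmax : sLTheta 1 X * kappaTheta 1 X = max (sLTheta 1 X) (kappaTheta 1 X) :=
    Cardinal.mul_eq_max ha₁ ha₂
  have h1κ : sLTheta 1 X ≤ sLTheta 1 X * kappaTheta 1 X := by
    rw [hmax]; exact le_max_left _ _
  have h2κ : kappaTheta 1 X ≤ sLTheta 1 X * kappaTheta 1 X := by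
    rw [hmax]; exact le_max_right _ _
  choose Vf hVc hVm hVcof using hkt
  have S : Stmt2Proof.Setup X (sLTheta 1 X * kappaTheta 1 X) :=
    { hκ := ha₁.trans h1κ
      ury := hX
      V := Vf
      hVcard := fun x => (hVc x).trans h2κ
      hVmem := hVm
      hVcof := hVcof
      sl := fun A 𝒰 hop hcov => by
        obtain ⟨𝒱, h1, h2, h3⟩ := hsl A 𝒰 hop hcov
        exact ⟨𝒱, h1, h2.trans h1κ, h3⟩ }
  exact S.card_le
end

section
/- For every topological space X and every positive integer n, sL_{s(n)}(X) ≤ sL_{θ(n)}(X). -/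
open Cardinal Set

universe u

lemma chain_mem {X : Type u} [TopologicalSpace X] {n : ℕ} (hn : 0 < n) {x : X}
    {V : ℕ → Set X} (hx0 : x ∈ V 0)
    (hchain : ∀ i, i + 1 < n → closure (V i) ⊆ V (i + 1)) :
    x ∈ V (n - 1) := by
  have hxin : ∀ i, i < n → x ∈ V i := by
    intro i
    induction i with
    | zero => intro _; exact hx0
    | succ k ih => intro hk; exact hchain k hk (subset_closure (ih (by omega)))
  exact hxin (n - 1) (by omega)

lemma thetaInt_subset {X : Type u} [TopologicalSpace X] {n : ℕ} (hn : 0 < n) (U : Set X) :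
    (thetaCl n Uᶜ)ᶜ ⊆ U := by
  intro x hx
  simp only [thetaCl, mem_compl_iff, mem_setOf_eq, not_not] at hx
  obtain ⟨V, _, hx0, hchain, hdisj⟩ := hx
  have hxV : x ∈ closure (V (n - 1)) := subset_closure (chain_mem hn hx0 hchain)
  by_contra hU
  exact (Set.eq_empty_iff_forall_notMem.mp hdisj x) ⟨hxV, hU⟩

lemma subset_thetaCl_s11 {X : Type u} [TopologicalSpace X] {n : ℕ} (hn : 0 < n) (A : Set X) :
    A ⊆ thetaCl n A := by
  intro x hx
  rintro ⟨V, _, hx0, hchain, hdisj⟩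
  exact (Set.eq_empty_iff_forall_notMem.mp hdisj x)
    ⟨subset_closure (chain_mem hn hx0 hchain), hx⟩

theorem stmt11 (X : Type u) [TopologicalSpace X] (n : ℕ) (hn : 0 < n) :
    sLs n X ≤ sLTheta n X := by
  unfold sLs sLTheta
  apply csInf_le_csInf (OrderBot.bddBelow _)
  · refine ⟨max Cardinal.aleph0 (#(Set X)), le_max_left _ _, ?_⟩
    intro A 𝒰 _ hcov
    refine ⟨𝒰, subset_rfl, le_trans (Cardinal.mk_set_le 𝒰) (le_max_right _ _), ?_⟩
    exact ((subset_thetaCl_s11 hn A).trans hcov).trans subset_closure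
  · rintro κ ⟨hκ, hprop⟩
    refine ⟨hκ, ?_⟩
    intro A 𝒰 hA h𝒰 hScov
    apply hprop A 𝒰 h𝒰
    rw [hA]
    intro x hx
    obtain ⟨U, hU, hxU⟩ := by simpa using hScov hx
    exact ⟨U, hU, thetaInt_subset hn U hxU⟩
end

section
/- For every topological space X, every positive integer n, and all points x, y ∈ X: x ∉ cl_{θⁿ}({y}) if and only if y ∉ cl_{θⁿ}({x}) (i.e., the relation of being S-separated via cl_{θⁿ} between points is symmetric for n > 0). -/
open Cardinal Set

universe u

lemma key_swap {X : Type u} [TopologicalSpace X] {n : ℕ} (hn : 0 < n) {x y : X}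
    (h : ∃ U : ℕ → Set X, (∀ i, i < n → IsOpen (U i)) ∧ x ∈ U 0 ∧
      (∀ i, i + 1 < n → closure (U i) ⊆ U (i + 1)) ∧
      closure (U (n - 1)) ∩ ({y} : Set X) = ∅) :
    ∃ U : ℕ → Set X, (∀ i, i < n → IsOpen (U i)) ∧ y ∈ U 0 ∧
      (∀ i, i + 1 < n → closure (U i) ⊆ U (i + 1)) ∧
      closure (U (n - 1)) ∩ ({x} : Set X) = ∅ := by
  obtain ⟨U, hopen, hx, hchain, hlast⟩ := h
  refine ⟨fun i => (closure (U (n - 1 - i)))ᶜ, fun i _ => isClosed_closure.isOpen_compl,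
    ?_, ?_, ?_⟩
  · simp only [Nat.sub_zero]
    intro hy
    exact Set.eq_empty_iff_forall_notMem.mp hlast y ⟨hy, rfl⟩
  · intro i hi
    have h1 : (closure (U (n - 1 - i)))ᶜ ⊆ (U (n - 1 - i))ᶜ :=
      Set.compl_subset_compl.mpr subset_closure
    have hcl : closure ((closure (U (n - 1 - i)))ᶜ) ⊆ (U (n - 1 - i))ᶜ :=
      closure_minimal h1 (isClosed_compl_iff.mpr (hopen _ (by omega)))
    refine hcl.trans (Set.compl_subset_compl.mpr ?_)
    have h2 : n - 1 - i = n - 1 - (i + 1) + 1 := by omega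
    rw [h2]
    exact hchain _ (by omega)
  · simp only [Nat.sub_self]
    have hcl : closure ((closure (U 0))ᶜ) ⊆ (U 0)ᶜ :=
      closure_minimal (Set.compl_subset_compl.mpr subset_closure)
        (isClosed_compl_iff.mpr (hopen 0 hn))
    apply Set.eq_empty_iff_forall_notMem.mpr
    rintro z ⟨hz, rfl⟩
    exact hcl hz hx

theorem stmt12 (X : Type u) [TopologicalSpace X] (n : ℕ) (hn : 0 < n) (x y : X) :
    x ∉ thetaCl n ({y} : Set X) ↔ y ∉ thetaCl n ({x} : Set X) := by
  simp only [thetaCl, Set.mem_setOf_eq, not_not]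
  exact ⟨key_swap hn, key_swap hn⟩
end
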